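/- (Combinatorial core of Lemma 5: an antichain meets few grid cells.) Let X and Y be finite sets of real numbers and let S be a finite set of points in ℝ² that is an antichain under dominance: for any two distinct points p, p' ∈ S it is not the case that x(p) ≤ x(p') and y(p) ≤ y(p'). Assign to each p ∈ S its cell index cell(p) = (|{c ∈ X : c < x(p)}|, |{c ∈ Y : c < y(p)}|). Then the number of distinct values of cell(p) over p ∈ S is at most |X| + |Y| + 1. -/

import Mathlib

open Finset

/-- combinatorial core of Lemma 5: An antichain under dominance meets at
most `|X| + |Y| + 1` cells of the grid determined by the vertical lines through `X` and
the horizontal lines through `Y`. -/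
theorem antichain_meets_few_cells
    (X Y : Finset ℝ) (S : Finset (ℝ × ℝ))
    (hanti : ∀ p ∈ S, ∀ p' ∈ S, p ≠ p' → ¬ (p.1 ≤ p'.1 ∧ p.2 ≤ p'.2)) :
    (S.image (fun p => ((X.filter (fun c => c < p.1)).card,
                        (Y.filter (fun c => c < p.2)).card))).card
      ≤ X.card + Y.card + 1 := by
  have hX : ∀ a b : ℝ, a ≤ b →
      (X.filter (fun c => c < a)).card ≤ (X.filter (fun c => c < b)).card := by
    intro a b hab
    refine card_le_card (monotone_filter_right _ ?_)
    intro c _ hc; exact lt_of_lt_of_le hc hab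
  have hY : ∀ a b : ℝ, a ≤ b →
      (Y.filter (fun c => c < a)).card ≤ (Y.filter (fun c => c < b)).card := by
    intro a b hab
    refine card_le_card (monotone_filter_right _ ?_)
    intro c _ hc; exact lt_of_lt_of_le hc hab
  have key : ∀ p ∈ S, ∀ p' ∈ S, p.1 < p'.1 →
      (X.filter (fun c => c < p.1)).card ≤ (X.filter (fun c => c < p'.1)).card ∧
      (Y.filter (fun c => c < p'.2)).card ≤ (Y.filter (fun c => c < p.2)).card := by
    intro p hp p' hp' hxy
    have hne : p ≠ p' := by
      intro h; rw [h] at hxy; exact lt_irrefl _ hxy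
    have hy : p'.2 ≤ p.2 := by
      by_contra h
      push_neg at h
      exact hanti p hp p' hp' hne ⟨le_of_lt hxy, le_of_lt h⟩
    exact ⟨hX _ _ (le_of_lt hxy), hY _ _ hy⟩
  have hinj : Set.InjOn (fun c : ℕ × ℕ => (c.1 : ℤ) - c.2)
      (S.image (fun p => ((X.filter (fun c => c < p.1)).card,
                          (Y.filter (fun c => c < p.2)).card))) := by
    intro c hc c' hc' hfe
    simp only [coe_image, Set.mem_image, mem_coe] at hc hc'
    obtain ⟨p, hp, rfl⟩ := hc
    obtain ⟨p', hp', rfl⟩ := hc'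
    simp only at hfe ⊢
    rw [Prod.mk.injEq]
    rcases lt_trichotomy p.1 p'.1 with h | h | h
    · obtain ⟨h1, h2⟩ := key p hp p' hp' h
      constructor <;> omega
    · by_cases hpe : p = p'
      · rw [hpe]; exact ⟨rfl, rfl⟩
      · exfalso
        rcases le_total p.2 p'.2 with h2 | h2
        · exact hanti p hp p' hp' hpe ⟨le_of_eq h, h2⟩
        · exact hanti p' hp' p hp (Ne.symm hpe) ⟨le_of_eq h.symm, h2⟩
    · obtain ⟨h1, h2⟩ := key p' hp' p hp h
      constructor <;> omega
  have hmaps : ∀ c ∈ S.image (fun p => ((X.filter (fun c => c < p.1)).card,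
                          (Y.filter (fun c => c < p.2)).card)),
      ((c.1 : ℤ) - c.2) ∈ Finset.Icc (-(Y.card : ℤ)) X.card := by
    intro c hc
    simp only [mem_image] at hc
    obtain ⟨p, hp, rfl⟩ := hc
    have h1 : (X.filter (fun c => c < p.1)).card ≤ X.card := card_le_card (filter_subset _ _)
    have h2 : (Y.filter (fun c => c < p.2)).card ≤ Y.card := card_le_card (filter_subset _ _)
    simp only [Finset.mem_Icc]
    omega
  have hle := Finset.card_le_card_of_injOn _ hmaps hinj
  calc _ ≤ (Finset.Icc (-(Y.card : ℤ)) (X.card : ℤ)).card := hle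
    _ = X.card + Y.card + 1 := by
        rw [Int.card_Icc]
        omega
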